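/- arXiv:2007.09132 — 2 statements merged into one kernel-verified Lean document; each statement's English description precedes it below -/
import Mathlib

section
/- Let m : J → ℝ be differentiable with continuous derivative m′ and let M = sup_{τ∈J} |m′(τ)|. Then for every τ ∈ J, |(^{ABC}D^α m)(τ)| ≤ (M B(α)/(1−α)) · τ · E_{α,2}((α/(1−α)) τ^α), where E_{α,2}(z) = ∑_{k=0}^∞ z^k / Γ(αk + 2). -/
open Real Finset MeasureTheory

/-- One-parameter Mittag-Leffler function `E_α(z) = ∑ zⁿ / Γ(nα+1)`. -/
noncomputable def mlE (α z : ℝ) : ℝ := ∑' n : ℕ, z ^ n / Real.Gamma (n * α + 1)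

/-- Atangana–Baleanu–Caputo fractional derivative of order `α` (base point 0),
with normalization constant `B = B(α)`. -/
noncomputable def abcD (α B : ℝ) (m : ℝ → ℝ) (τ : ℝ) : ℝ :=
  B / (1 - α) * ∫ σ in (0:ℝ)..τ, mlE α (-(α / (1 - α)) * (τ - σ) ^ α) * deriv m σ


/-- Two-parameter Mittag-Leffler function `E_{α,β}(z) = ∑ zᵏ / Γ(kα+β)`. -/
noncomputable def mlE2 (α β z : ℝ) : ℝ := ∑' k : ℕ, z ^ k / Real.Gamma (k * α + β)

lemma summable_gamma_aux {a c : ℝ} (ha : 0 < a) (hc : 1 ≤ c) {y : ℝ} (hy : 0 ≤ y) :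
    Summable (fun n : ℕ => y ^ n / Real.Gamma (n * a + c)) := by
  set f : ℕ → ℝ := fun n => y ^ n / Real.Gamma (n * a + c) with hf
  have hΓpos : ∀ n : ℕ, 0 < Real.Gamma (n * a + c) := by
    intro n
    apply Real.Gamma_pos_of_pos
    have : (0:ℝ) ≤ n * a := by positivity
    linarith
  have hfnn : ∀ n, 0 ≤ f n := fun n => div_nonneg (pow_nonneg hy n) (hΓpos n).le
  obtain ⟨k, hk1, hka⟩ : ∃ k : ℕ, 1 ≤ k ∧ 1 ≤ (k:ℝ) * a := by
    refine ⟨⌈a⁻¹⌉₊, Nat.one_le_ceil_iff.2 (by positivity), ?_⟩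
    have := Nat.le_ceil a⁻¹
    calc (1:ℝ) = a⁻¹ * a := by field_simp
      _ ≤ (⌈a⁻¹⌉₊ : ℝ) * a := by nlinarith
  set N : ℕ := ⌈2 * y ^ k / a⌉₊ with hN
  have hNa : 2 * y ^ k ≤ (N:ℝ) * a := by
    have := Nat.le_ceil (2 * y ^ k / a)
    calc 2 * y ^ k = 2 * y ^ k / a * a := by field_simp
      _ ≤ (N:ℝ) * a := by nlinarith
  set g : ℕ → ℝ := fun n => f (n + N) with hg
  have key : ∀ n : ℕ, g (n + k) ≤ 2⁻¹ * g n := by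
    intro n
    set x : ℝ := ((n + N : ℕ) : ℝ) * a + c with hx
    have hx1 : 1 ≤ x := by
      have : (0:ℝ) ≤ ((n + N : ℕ) : ℝ) * a := by positivity
      linarith
    have hx2y : 2 * y ^ k ≤ x := by
      have h1 : ((N:ℕ):ℝ) * a ≤ ((n + N : ℕ) : ℝ) * a := by
        have : ((N:ℕ):ℝ) ≤ ((n + N : ℕ) : ℝ) := by exact_mod_cast Nat.le_add_left N n
        nlinarith
      have : (0:ℝ) < c := lt_of_lt_of_le one_pos hc
      linarith
    have hxpos : 0 < x := by linarith
    have hΓadd : Real.Gamma (x + 1) = x * Real.Gamma x := Real.Gamma_add_one (by linarith)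
    have hΓmono : x * Real.Gamma x ≤ Real.Gamma (((n + k + N : ℕ) : ℝ) * a + c) := by
      rw [← hΓadd]
      have harg : ((n + k + N : ℕ) : ℝ) * a + c = x + (k:ℝ) * a := by push_cast [hx]; ring
      rw [harg]
      refine Real.Gamma_strictMonoOn_Ici.monotoneOn ?_ ?_ (by linarith)
      · simp only [Set.mem_Ici]; linarith
      · simp only [Set.mem_Ici]; linarith
    have hΓxpos : 0 < Real.Gamma x := by
      have := hΓpos (n + N); rwa [← hx] at this
    have h1 : g (n + k) ≤ y ^ (n + N) * y ^ k / (x * Real.Gamma x) := by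
      simp only [hg, hf]
      have e : n + k + N = n + N + k := by omega
      calc y ^ (n + k + N) / Real.Gamma (((n + k + N : ℕ) : ℝ) * a + c)
          ≤ y ^ (n + k + N) / (x * Real.Gamma x) := by
            gcongr
            all_goals first | positivity | exact hΓmono
        _ = y ^ (n + N) * y ^ k / (x * Real.Gamma x) := by rw [e, pow_add]
    have h2 : y ^ (n + N) * y ^ k / (x * Real.Gamma x) = y ^ k / x * g n := by
      simp only [hg, hf]
      rw [hx, div_mul_div_comm]
      ring
    have h3 : y ^ k / x ≤ 2⁻¹ := by
      rw [div_le_iff₀ hxpos]; linarith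
    calc g (n + k) ≤ y ^ k / x * g n := by rw [← h2]; exact h1
      _ ≤ 2⁻¹ * g n := by
          have := hfnn (n + N)
          exact mul_le_mul_of_nonneg_right h3 this
  -- geometric bound
  set q : ℝ := (2:ℝ)⁻¹ ^ ((k:ℝ)⁻¹) with hq
  have hq0 : 0 < q := Real.rpow_pos_of_pos (by norm_num) _
  have hq1 : q < 1 := Real.rpow_lt_one (by norm_num) (by norm_num) (by positivity)
  have hqk : q ^ k = 2⁻¹ := by
    rw [hq, ← Real.rpow_natCast ((2:ℝ)⁻¹ ^ ((k:ℝ)⁻¹)) k, ← Real.rpow_mul (by norm_num)]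
    rw [inv_mul_cancel₀ (by exact_mod_cast (Nat.cast_ne_zero (R := ℝ)).2 (by omega)), Real.rpow_one]
  set D : ℝ := (∑ r ∈ Finset.range k, g r) / q ^ k with hD
  have hDnn : 0 ≤ D := by
    apply div_nonneg
    · exact Finset.sum_nonneg fun r _ => hfnn _
    · positivity
  have hbase : ∀ r < k, g r ≤ D * q ^ r := by
    intro r hr
    have h1 : g r ≤ ∑ r ∈ Finset.range k, g r :=
      Finset.single_le_sum (f := g) (fun i _ => hfnn _) (Finset.mem_range.2 hr)
    have h2 : (∑ r ∈ Finset.range k, g r) = D * q ^ k := by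
      rw [hD]; field_simp
    have h3 : q ^ k ≤ q ^ r := pow_le_pow_of_le_one hq0.le hq1.le hr.le
    calc g r ≤ D * q ^ k := by rw [← h2]; exact h1
      _ ≤ D * q ^ r := mul_le_mul_of_nonneg_left h3 hDnn
  have hgeo : ∀ n, g n ≤ D * q ^ n := by
    intro n
    induction n using Nat.strong_induction_on with
    | _ n ih =>
      by_cases hn : n < k
      · exact hbase n hn
      · push_neg at hn
        have hnk : n - k + k = n := Nat.sub_add_cancel hn
        have h1 : g n ≤ 2⁻¹ * g (n - k) := by
          have := key (n - k); rwa [hnk] at this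
        have h2 : g (n - k) ≤ D * q ^ (n - k) := ih (n - k) (by omega)
        calc g n ≤ 2⁻¹ * (D * q ^ (n - k)) :=
              h1.trans (mul_le_mul_of_nonneg_left h2 (by norm_num))
          _ = D * (q ^ (n - k) * q ^ k) := by rw [hqk]; ring
          _ = D * q ^ n := by rw [← pow_add, hnk]
  have hgsum : Summable g :=
    Summable.of_nonneg_of_le (fun n => hfnn _) hgeo
      (((summable_geometric_of_lt_one hq0.le hq1)).mul_left D)
  exact (summable_nat_add_iff N).mp hgsum

theorem abc_deriv_bound
    (T α B M : ℝ) (hT : 0 < T) (hα : 0 < α) (hα1 : α < 1) (hB : 0 < B)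
    (m : ℝ → ℝ)
    (hmdiff : ∀ τ ∈ Set.Icc (0:ℝ) T, DifferentiableAt ℝ m τ)
    (hm' : ContinuousOn (deriv m) (Set.Icc (0:ℝ) T))
    (hM : M = sSup ((fun τ => |deriv m τ|) '' Set.Icc (0:ℝ) T)) :
    ∀ τ ∈ Set.Icc (0:ℝ) T,
      |abcD α B m τ| ≤ M * B / (1 - α) * τ * mlE2 α 2 (α / (1 - α) * τ ^ α) := by
  intro τ hτ
  obtain ⟨hτ0, hτT⟩ := hτ
  have h1α : 0 < 1 - α := by linarith
  have hMb : ∀ σ ∈ Set.Icc (0:ℝ) T, |deriv m σ| ≤ M := by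
    intro σ hσ
    rw [hM]
    exact le_csSup (isCompact_Icc.image_of_continuousOn hm'.abs).bddAbove ⟨σ, hσ, rfl⟩
  have hM0 : 0 ≤ M := le_trans (abs_nonneg _) (hMb 0 ⟨le_rfl, hT.le⟩)
  rcases eq_or_lt_of_le hτ0 with h0 | hτpos
  · have h1 : abcD α B m τ = 0 := by
      rw [abcD, ← h0]
      simp
    rw [h1, ← h0]
    simp
  set lam : ℝ := α / (1 - α) with hlam
  have hlam0 : 0 ≤ lam := by positivity
  set S : Set ℝ := Set.Ioc (0:ℝ) τ with hS
  set F : ℕ → ℝ → ℝ :=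
    fun n σ => (-lam) ^ n * (τ - σ) ^ ((n:ℝ) * α) / Real.Gamma ((n:ℝ) * α + 1) * deriv m σ
    with hF
  have hΓpos1 : ∀ n : ℕ, 0 < Real.Gamma ((n:ℝ) * α + 1) := by
    intro n; apply Real.Gamma_pos_of_pos; positivity
  have hsub : Set.Icc (0:ℝ) τ ⊆ Set.Icc 0 T := Set.Icc_subset_Icc le_rfl hτT
  have hcont : ∀ n : ℕ, ContinuousOn (F n) (Set.Icc 0 τ) := by
    intro n
    apply ContinuousOn.mul _ (hm'.mono hsub)
    apply ContinuousOn.div_const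
    apply ContinuousOn.mul continuousOn_const
    exact ((continuous_const.sub continuous_id).rpow_const
      (fun x => Or.inr (by positivity))).continuousOn
  have hFint : ∀ n : ℕ, IntegrableOn (F n) S := fun n =>
    ((hcont n).integrableOn_Icc).mono_set Set.Ioc_subset_Icc_self
  have hsum2 : Summable (fun n : ℕ => (lam * τ ^ α) ^ n / Real.Gamma ((n:ℝ) * α + 2)) :=
    summable_gamma_aux hα (by norm_num) (by positivity)
  have hbnd_sum : Summable (fun n : ℕ => M * τ * ((lam * τ ^ α) ^ n / Real.Gamma ((n:ℝ) * α + 2))) :=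
    hsum2.mul_left _
  -- the integral of the norm of each term is bounded
  have hIbound : ∀ n : ℕ, (∫ σ in S, ‖F n σ‖) ≤
      M * τ * ((lam * τ ^ α) ^ n / Real.Gamma ((n:ℝ) * α + 2)) := by
    intro n
    set C : ℝ := lam ^ n / Real.Gamma ((n:ℝ) * α + 1) * M with hC
    have hC0 : 0 ≤ C := by
      apply mul_nonneg _ hM0
      exact div_nonneg (pow_nonneg hlam0 n) (hΓpos1 n).le
    have hpt : ∀ σ ∈ S, ‖F n σ‖ ≤ C * (τ - σ) ^ ((n:ℝ) * α) := by
      intro σ hσ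
      obtain ⟨hσ0, hστ⟩ := hσ
      have hτσ : (0:ℝ) ≤ τ - σ := by linarith
      have habs : ‖F n σ‖ =
          lam ^ n * (τ - σ) ^ ((n:ℝ) * α) / Real.Gamma ((n:ℝ) * α + 1) * |deriv m σ| := by
        rw [hF]
        simp only [Real.norm_eq_abs, abs_mul, abs_div, abs_pow, abs_neg,
          abs_of_nonneg hlam0, abs_of_nonneg (Real.rpow_nonneg hτσ _),
          abs_of_nonneg (hΓpos1 n).le]
      rw [habs]
      have hb := hMb σ ⟨hσ0.le, le_trans hστ hτT⟩
      have h1 : lam ^ n * (τ - σ) ^ ((n:ℝ) * α) / Real.Gamma ((n:ℝ) * α + 1) * |deriv m σ|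
          ≤ lam ^ n * (τ - σ) ^ ((n:ℝ) * α) / Real.Gamma ((n:ℝ) * α + 1) * M := by
        apply mul_le_mul_of_nonneg_left hb
        positivity
      refine h1.trans (le_of_eq ?_)
      rw [hC]; ring
    have hGcont : Continuous fun σ => C * (τ - σ) ^ ((n:ℝ) * α) :=
      continuous_const.mul ((continuous_const.sub continuous_id).rpow_const
        (fun x => Or.inr (by positivity)))
    have hGint : IntegrableOn (fun σ => C * (τ - σ) ^ ((n:ℝ) * α)) S :=
      hGcont.integrableOn_Ioc
    have hmono : (∫ σ in S, ‖F n σ‖) ≤ ∫ σ in S, C * (τ - σ) ^ ((n:ℝ) * α) :=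
      setIntegral_mono_on (hFint n).norm hGint measurableSet_Ioc hpt
    have hval : (∫ σ in S, C * (τ - σ) ^ ((n:ℝ) * α))
        = C * (τ ^ ((n:ℝ) * α + 1) / ((n:ℝ) * α + 1)) := by
      rw [MeasureTheory.integral_const_mul]
      congr 1
      rw [hS, ← intervalIntegral.integral_of_le hτpos.le]
      rw [intervalIntegral.integral_comp_sub_left (fun u => u ^ ((n:ℝ) * α)) τ]
      simp only [sub_self, sub_zero]
      rw [integral_rpow (Or.inl (lt_of_lt_of_le neg_one_lt_zero (by positivity)))]
      rw [Real.zero_rpow (by positivity : (0:ℝ) < (n:ℝ) * α + 1).ne']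
      ring
    have hfin : C * (τ ^ ((n:ℝ) * α + 1) / ((n:ℝ) * α + 1))
        = M * τ * ((lam * τ ^ α) ^ n / Real.Gamma ((n:ℝ) * α + 2)) := by
      have hne : ((n:ℝ) * α + 1) ≠ 0 := by positivity
      rw [show ((n:ℝ) * α + 2) = ((n:ℝ) * α + 1) + 1 by ring, Real.Gamma_add_one hne]
      rw [Real.rpow_add hτpos, Real.rpow_one, mul_pow,
        ← Real.rpow_natCast (τ ^ α) n, ← Real.rpow_mul hτpos.le, mul_comm α (n:ℝ)]
      rw [hC]
      field_simp
    exact hmono.trans (le_of_eq (hval.trans hfin))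
  have hInn : ∀ n : ℕ, 0 ≤ ∫ σ in S, ‖F n σ‖ := fun n =>
    integral_nonneg fun σ => norm_nonneg _
  have hIsum : Summable (fun n : ℕ => ∫ σ in S, ‖F n σ‖) :=
    Summable.of_nonneg_of_le hInn hIbound hbnd_sum
  have hswap : (∑' n : ℕ, ∫ σ in S, F n σ) = ∫ σ in S, (∑' n : ℕ, F n σ) :=
    MeasureTheory.integral_tsum_of_summable_integral_norm (fun n => hFint n) hIsum
  have hpt2 : ∀ σ ∈ S, mlE α (-(α / (1 - α)) * (τ - σ) ^ α) * deriv m σ = ∑' n : ℕ, F n σ := by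
    intro σ hσ
    obtain ⟨hσ0, hστ⟩ := hσ
    have hτσ : (0:ℝ) ≤ τ - σ := by linarith
    simp only [mlE, hF]
    rw [← tsum_mul_right]
    refine tsum_congr fun n => ?_
    have hz : (-(α / (1 - α)) * (τ - σ) ^ α) ^ n = (-lam) ^ n * (τ - σ) ^ ((n:ℝ) * α) := by
      rw [mul_pow, ← Real.rpow_natCast ((τ - σ) ^ α) n, ← Real.rpow_mul hτσ, mul_comm α (n:ℝ)]
    rw [hz]
  have habc : |abcD α B m τ| =
      B / (1 - α) * |∫ σ in (0:ℝ)..τ, mlE α (-(α / (1 - α)) * (τ - σ) ^ α) * deriv m σ| := by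
    rw [abcD, abs_mul, abs_of_nonneg (by positivity : (0:ℝ) ≤ B / (1 - α))]
  have hieq : (∫ σ in (0:ℝ)..τ, mlE α (-(α / (1 - α)) * (τ - σ) ^ α) * deriv m σ)
      = ∫ σ in S, (∑' n : ℕ, F n σ) := by
    rw [intervalIntegral.integral_of_le hτpos.le]
    exact MeasureTheory.setIntegral_congr_fun measurableSet_Ioc hpt2
  have hintle : ∀ n : ℕ, |∫ σ in S, F n σ| ≤ ∫ σ in S, ‖F n σ‖ := by
    intro n
    rw [← Real.norm_eq_abs]
    exact norm_integral_le_integral_norm _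
  have habs_sum : Summable (fun n : ℕ => |∫ σ in S, F n σ|) :=
    Summable.of_nonneg_of_le (fun n => abs_nonneg _) hintle hIsum
  calc |abcD α B m τ|
      = B / (1 - α) * |∑' n : ℕ, ∫ σ in S, F n σ| := by rw [habc, hieq, ← hswap]
    _ ≤ B / (1 - α) * ∑' n : ℕ, M * τ * ((lam * τ ^ α) ^ n / Real.Gamma ((n:ℝ) * α + 2)) := by
        apply mul_le_mul_of_nonneg_left _ (by positivity)
        have hnorm : Summable fun n : ℕ => ‖∫ σ in S, F n σ‖ := by
          simpa only [Real.norm_eq_abs] using habs_sum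
        have h1 : |∑' n : ℕ, ∫ σ in S, F n σ| ≤ ∑' n : ℕ, |∫ σ in S, F n σ| := by
          have := norm_tsum_le_tsum_norm hnorm
          simpa only [Real.norm_eq_abs] using this
        exact h1.trans (Summable.tsum_le_tsum (fun n => (hintle n).trans (hIbound n)) habs_sum hbnd_sum)
    _ = M * B / (1 - α) * τ * mlE2 α 2 (lam * τ ^ α) := by
        rw [tsum_mul_left]
        simp only [mlE2]
        ring
end

section
/- Let f : J × ℝ → ℝ satisfy: |f(σ, ω(σ))| ≤ M for all σ ∈ J along a continuous solution ω of the ABC integral equation on J with initial value ω₀, and the Lipschitz-type condition |f(τ₁, ω) − f(τ₂, η)| ≤ L₁|τ₁ − τ₂| + L₂|ω − η| for all τ₁, τ₂ ∈ J and ω, η ∈ ℝ, where L₁ > 0 and 0 < L₂ < B(α)/(1−α). Then for all 0 < τ₁ ≤ τ₂ < T, |ω(τ₁) − ω(τ₂)| ≤ (1/(1 − (1−α)L₂/B(α))) · [ ((1−α)L₁/B(α)) (τ₂ − τ₁) + (M/(B(α)Γ(α))) ( 2(τ₂ − τ₁)^α + τ₁^α − τ₂^α ) ]. In particular, the family of such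 solutions is equicontinuous on J. -/
open MeasureTheory intervalIntegral

private lemma rpow_subadd_aux {x y p : ℝ} (hx : 0 ≤ x) (hy : 0 ≤ y) (hp : 0 ≤ p) (hp1 : p ≤ 1) :
    (x + y) ^ p ≤ x ^ p + y ^ p := by
  have h := NNReal.coe_le_coe.2 (NNReal.rpow_add_le_add_rpow x.toNNReal y.toNNReal hp hp1)
  simpa [NNReal.coe_rpow, Real.coe_toNNReal x hx, Real.coe_toNNReal y hy,
    ← Real.toNNReal_add hx hy, Real.coe_toNNReal _ (by positivity : (0:ℝ) ≤ x + y)] using h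

theorem abc_integral_equation_equicontinuity_estimate
    (T α B M L₁ L₂ ω₀ : ℝ) (hT : 0 < T) (hα : 0 < α) (hα1 : α < 1) (hB : 0 < B)
    (f : ℝ → ℝ → ℝ) (ω : ℝ → ℝ)
    (hωc : ContinuousOn ω (Set.Icc (0:ℝ) T))
    (hsol : ∀ τ ∈ Set.Icc (0:ℝ) T,
      ω τ = ω₀ + (1 - α) / B * f τ (ω τ) +
        α / (B * Real.Gamma α) *
          ∫ σ in (0:ℝ)..τ, (τ - σ) ^ (α - 1) * f σ (ω σ))
    (hM : ∀ σ ∈ Set.Icc (0:ℝ) T, |f σ (ω σ)| ≤ M)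
    (hL₁ : 0 < L₁) (hL₂ : 0 < L₂) (hL₂' : L₂ < B / (1 - α))
    (hLip : ∀ τ₁ ∈ Set.Icc (0:ℝ) T, ∀ τ₂ ∈ Set.Icc (0:ℝ) T, ∀ x y : ℝ,
      |f τ₁ x - f τ₂ y| ≤ L₁ * |τ₁ - τ₂| + L₂ * |x - y|) :
    ∀ τ₁ τ₂ : ℝ, 0 < τ₁ → τ₁ ≤ τ₂ → τ₂ < T →
      |ω τ₁ - ω τ₂| ≤
        1 / (1 - (1 - α) * L₂ / B) *
          ((1 - α) * L₁ / B * (τ₂ - τ₁) +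
            M / (B * Real.Gamma α) *
              (2 * (τ₂ - τ₁) ^ α + τ₁ ^ α - τ₂ ^ α)) := by
  intro τ₁ τ₂ hτ₁ h12 hτ₂T
  have hΓ : 0 < Real.Gamma α := Real.Gamma_pos_of_pos hα
  have hτ₂0 : 0 < τ₂ := lt_of_lt_of_le hτ₁ h12
  have hmem1 : τ₁ ∈ Set.Icc (0:ℝ) T := ⟨hτ₁.le, le_of_lt (lt_of_le_of_lt h12 hτ₂T)⟩
  have hmem2 : τ₂ ∈ Set.Icc (0:ℝ) T := ⟨hτ₂0.le, hτ₂T.le⟩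
  have hM0 : 0 ≤ M := le_trans (abs_nonneg _) (hM 0 ⟨le_refl 0, hT.le⟩)
  have h1α : 0 < 1 - α := by linarith
  -- continuity of σ ↦ f σ (ω σ)
  have hgc : ContinuousOn (fun σ => f σ (ω σ)) (Set.Icc (0:ℝ) T) := by
    intro x hx
    rw [Metric.continuousWithinAt_iff]
    intro ε hε
    have hω := hωc x hx
    rw [Metric.continuousWithinAt_iff] at hω
    obtain ⟨δ₁, hδ₁, hδ₁'⟩ := hω (ε / (2 * L₂)) (by positivity)
    refine ⟨min δ₁ (ε / (2 * L₁)), by positivity, fun {y} hy hdy => ?_⟩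
    have h1 : dist (ω y) (ω x) < ε / (2 * L₂) := hδ₁' hy (lt_of_lt_of_le hdy (min_le_left _ _))
    have h2 : dist y x < ε / (2 * L₁) := lt_of_lt_of_le hdy (min_le_right _ _)
    have h3 := hLip y hy x hx (ω y) (ω x)
    rw [Real.dist_eq] at h1 h2 ⊢
    calc |f y (ω y) - f x (ω x)| ≤ L₁ * |y - x| + L₂ * |ω y - ω x| := h3
      _ < L₁ * (ε / (2 * L₁)) + L₂ * (ε / (2 * L₂)) :=
          add_lt_add ((mul_lt_mul_iff_right₀ hL₁).2 h2) ((mul_lt_mul_iff_right₀ hL₂).2 h1)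
      _ = ε := by field_simp; ring
  -- kernel integrability and value
  have hkint : ∀ a b c : ℝ, IntervalIntegrable (fun σ => (c - σ) ^ (α - 1)) volume a b := by
    intro a b c
    simpa using (intervalIntegral.intervalIntegrable_rpow' (a := c - a) (b := c - b)
      (by linarith : (-1:ℝ) < α - 1)).comp_sub_left c
  have hkval : ∀ a b c : ℝ,
      (∫ σ in a..b, (c - σ) ^ (α - 1)) = ((c - a) ^ α - (c - b) ^ α) / α := by
    intro a b c
    rw [intervalIntegral.integral_comp_sub_left (fun x => x ^ (α - 1)) c,
      integral_rpow (Or.inl (by linarith))]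
    rw [sub_add_cancel]
  have hgint : ∀ a b c : ℝ, Set.uIcc a b ⊆ Set.Icc (0:ℝ) T →
      IntervalIntegrable (fun σ => (c - σ) ^ (α - 1) * f σ (ω σ)) volume a b :=
    fun a b c hsub => (hkint a b c).mul_continuousOn (hgc.mono hsub)
  have hsub1 : Set.uIcc (0:ℝ) τ₁ ⊆ Set.Icc (0:ℝ) T := by
    rw [Set.uIcc_of_le hτ₁.le]; exact Set.Icc_subset_Icc le_rfl hmem1.2
  have hsub12 : Set.uIcc τ₁ τ₂ ⊆ Set.Icc (0:ℝ) T := by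
    rw [Set.uIcc_of_le h12]; exact Set.Icc_subset_Icc hτ₁.le hmem2.2
  -- decomposition
  have hI2split : (∫ σ in (0:ℝ)..τ₂, (τ₂ - σ) ^ (α - 1) * f σ (ω σ))
      = (∫ σ in (0:ℝ)..τ₁, (τ₂ - σ) ^ (α - 1) * f σ (ω σ))
        + ∫ σ in τ₁..τ₂, (τ₂ - σ) ^ (α - 1) * f σ (ω σ) :=
    (intervalIntegral.integral_add_adjacent_intervals
      (hgint 0 τ₁ τ₂ hsub1) (hgint τ₁ τ₂ τ₂ hsub12)).symm
  have hA : (∫ σ in (0:ℝ)..τ₁, ((τ₁ - σ) ^ (α - 1) - (τ₂ - σ) ^ (α - 1)) * f σ (ω σ))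
      = (∫ σ in (0:ℝ)..τ₁, (τ₁ - σ) ^ (α - 1) * f σ (ω σ))
        - ∫ σ in (0:ℝ)..τ₁, (τ₂ - σ) ^ (α - 1) * f σ (ω σ) := by
    rw [← intervalIntegral.integral_sub (hgint 0 τ₁ τ₁ hsub1) (hgint 0 τ₁ τ₂ hsub1)]
    congr 1; ext σ; ring
  set A := ∫ σ in (0:ℝ)..τ₁, ((τ₁ - σ) ^ (α - 1) - (τ₂ - σ) ^ (α - 1)) * f σ (ω σ) with hAdef
  set C := ∫ σ in τ₁..τ₂, (τ₂ - σ) ^ (α - 1) * f σ (ω σ) with hCdef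
  have hX : 0 ≤ τ₁ ^ α + (τ₂ - τ₁) ^ α - τ₂ ^ α := by
    have h := rpow_subadd_aux hτ₁.le (by linarith : (0:ℝ) ≤ τ₂ - τ₁) hα.le hα1.le
    have h' : τ₁ + (τ₂ - τ₁) = τ₂ := by ring
    rw [h'] at h; linarith
  -- bound A
  have hAbound : |A| ≤ M * ((τ₁ ^ α + (τ₂ - τ₁) ^ α - τ₂ ^ α) / α) := by
    have hbint : IntervalIntegrable
        (fun σ => ((τ₁ - σ) ^ (α - 1) - (τ₂ - σ) ^ (α - 1)) * M) volume 0 τ₁ :=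
      ((hkint 0 τ₁ τ₁).sub (hkint 0 τ₁ τ₂)).mul_const M
    have hne : ∀ᵐ t : ℝ, t ≠ τ₁ := by
      rw [MeasureTheory.ae_iff]
      simpa using MeasureTheory.measure_singleton τ₁
    have hae : ∀ᵐ t ∂(volume.restrict (Set.uIoc (0:ℝ) τ₁)),
        ‖((τ₁ - t) ^ (α - 1) - (τ₂ - t) ^ (α - 1)) * f t (ω t)‖
          ≤ ((τ₁ - t) ^ (α - 1) - (τ₂ - t) ^ (α - 1)) * M := by
      filter_upwards [MeasureTheory.ae_restrict_mem measurableSet_uIoc,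
        MeasureTheory.ae_restrict_of_ae hne] with t ht htne
      rw [Set.uIoc_of_le hτ₁.le] at ht
      have ht1 : 0 < τ₁ - t := by
        rcases lt_or_eq_of_le ht.2 with h | h
        · linarith
        · exact absurd h htne
      have hknn : (τ₂ - t) ^ (α - 1) ≤ (τ₁ - t) ^ (α - 1) :=
        Real.rpow_le_rpow_of_nonpos ht1 (by linarith) (by linarith)
      have hk0 : 0 ≤ (τ₁ - t) ^ (α - 1) - (τ₂ - t) ^ (α - 1) := by linarith
      rw [Real.norm_eq_abs, abs_mul, abs_of_nonneg hk0]
      exact mul_le_mul_of_nonneg_left (hM t ⟨ht.1.le, le_trans ht.2 hmem1.2⟩) hk0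
    have hled := intervalIntegral.norm_integral_le_abs_of_norm_le hae hbint
    have hval : (∫ t in (0:ℝ)..τ₁, ((τ₁ - t) ^ (α - 1) - (τ₂ - t) ^ (α - 1)) * M)
        = M * ((τ₁ ^ α + (τ₂ - τ₁) ^ α - τ₂ ^ α) / α) := by
      rw [intervalIntegral.integral_mul_const,
        intervalIntegral.integral_sub (hkint 0 τ₁ τ₁) (hkint 0 τ₁ τ₂),
        hkval, hkval, sub_zero, sub_zero, sub_self, Real.zero_rpow (ne_of_gt hα)]
      ring
    rw [hval, abs_of_nonneg (mul_nonneg hM0 (div_nonneg hX hα.le))] at hled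
    simpa [Real.norm_eq_abs] using hled
  -- bound C
  have hCbound : |C| ≤ M * ((τ₂ - τ₁) ^ α / α) := by
    have hbint : IntervalIntegrable (fun σ => (τ₂ - σ) ^ (α - 1) * M) volume τ₁ τ₂ :=
      (hkint τ₁ τ₂ τ₂).mul_const M
    have hae : ∀ᵐ t ∂(volume.restrict (Set.uIoc τ₁ τ₂)),
        ‖(τ₂ - t) ^ (α - 1) * f t (ω t)‖ ≤ (τ₂ - t) ^ (α - 1) * M := by
      filter_upwards [MeasureTheory.ae_restrict_mem measurableSet_uIoc] with t ht
      rw [Set.uIoc_of_le h12] at ht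
      have hk0 : 0 ≤ (τ₂ - t) ^ (α - 1) := Real.rpow_nonneg (by linarith [ht.2]) _
      rw [Real.norm_eq_abs, abs_mul, abs_of_nonneg hk0]
      exact mul_le_mul_of_nonneg_left
        (hM t ⟨le_trans hτ₁.le ht.1.le, le_trans ht.2 hmem2.2⟩) hk0
    have hled := intervalIntegral.norm_integral_le_abs_of_norm_le hae hbint
    have hval : (∫ t in τ₁..τ₂, (τ₂ - t) ^ (α - 1) * M) = M * ((τ₂ - τ₁) ^ α / α) := by
      rw [intervalIntegral.integral_mul_const, hkval, sub_self,
        Real.zero_rpow (ne_of_gt hα)]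
      ring
    have hnn : 0 ≤ M * ((τ₂ - τ₁) ^ α / α) :=
      mul_nonneg hM0 (div_nonneg (Real.rpow_nonneg (by linarith) _) hα.le)
    rw [hval, abs_of_nonneg hnn] at hled
    simpa [Real.norm_eq_abs] using hled
  -- key identity
  have e1 := hsol τ₁ hmem1
  have e2 := hsol τ₂ hmem2
  have hkey : ω τ₁ - ω τ₂
      = (1 - α) / B * (f τ₁ (ω τ₁) - f τ₂ (ω τ₂))
        + α / (B * Real.Gamma α) * (A - C) := by
    rw [hA]
    linear_combination e1 - e2 - α / (B * Real.Gamma α) * hI2split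
  -- assemble
  have habs : |ω τ₁ - ω τ₂|
      ≤ (1 - α) / B * (L₁ * (τ₂ - τ₁) + L₂ * |ω τ₁ - ω τ₂|)
        + α / (B * Real.Gamma α)
          * (M * ((τ₁ ^ α + (τ₂ - τ₁) ^ α - τ₂ ^ α) / α) + M * ((τ₂ - τ₁) ^ α / α)) := by
    conv_lhs => rw [hkey]
    refine (abs_add_le _ _).trans (add_le_add ?_ ?_)
    · rw [abs_mul, abs_of_nonneg (by positivity : (0:ℝ) ≤ (1 - α) / B)]
      refine mul_le_mul_of_nonneg_left ?_ (by positivity)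
      have h3 := hLip τ₁ hmem1 τ₂ hmem2 (ω τ₁) (ω τ₂)
      rwa [abs_of_nonpos (by linarith : τ₁ - τ₂ ≤ 0), neg_sub] at h3
    · rw [abs_mul, abs_of_nonneg (by positivity : (0:ℝ) ≤ α / (B * Real.Gamma α))]
      refine mul_le_mul_of_nonneg_left ?_ (by positivity)
      exact (abs_sub A C).trans (add_le_add hAbound hCbound)
  have hD : 0 < 1 - (1 - α) * L₂ / B := by
    have h := (lt_div_iff₀ h1α).1 hL₂'
    rw [sub_pos, div_lt_one hB]
    nlinarith
  have habs' : |ω τ₁ - ω τ₂|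
      ≤ (1 - α) * L₂ / B * |ω τ₁ - ω τ₂|
        + ((1 - α) * L₁ / B * (τ₂ - τ₁) +
            M / (B * Real.Gamma α) * (2 * (τ₂ - τ₁) ^ α + τ₁ ^ α - τ₂ ^ α)) := by
    refine habs.trans_eq ?_
    field_simp
    ring
  rw [show (1:ℝ) / (1 - (1 - α) * L₂ / B) *
      ((1 - α) * L₁ / B * (τ₂ - τ₁) +
        M / (B * Real.Gamma α) * (2 * (τ₂ - τ₁) ^ α + τ₁ ^ α - τ₂ ^ α))
    = ((1 - α) * L₁ / B * (τ₂ - τ₁) +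
        M / (B * Real.Gamma α) * (2 * (τ₂ - τ₁) ^ α + τ₁ ^ α - τ₂ ^ α))
      / (1 - (1 - α) * L₂ / B) from by ring, le_div_iff₀ hD]
  calc |ω τ₁ - ω τ₂| * (1 - (1 - α) * L₂ / B)
      = |ω τ₁ - ω τ₂| - (1 - α) * L₂ / B * |ω τ₁ - ω τ₂| := by ring
    _ ≤ (1 - α) * L₁ / B * (τ₂ - τ₁) +
        M / (B * Real.Gamma α) * (2 * (τ₂ - τ₁) ^ α + τ₁ ^ α - τ₂ ^ α) := by
        linarith [habs']
end
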